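/- Let 𝒳 and 𝒴 be LFCM spaces, F : 𝒜(𝒳) → 𝒜(𝒴) a full and faithful *-functor, and C, D coarse 𝒳-modules. Suppose that for each M ∈ {C, D, C⊕D} there is a unitary U(M) : H_M → H_{F(M)} implementing the *-isomorphism End_{𝒜(𝒳)}(M) → End_{𝒜(𝒴)}(F(M)) induced by F. Let α_{C,D} = F(i_C) π_{F(C)} + F(i_D) π_{F(D)} : F(C) ⊕ F(D) → F(C ⊕ D) be the additivity isomorphism of F. Then there exist central unitaries u ∈ End_{𝒜(𝒳)}(C) and v ∈ End_{𝒜(𝒳)}(D) such that α_{C,D} = U(C⊕D) (u ⊕ v) (U(C) ⊕ U(D))*. -/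

import Mathlib

noncomputable section

open scoped ENNReal

/-! ## Relations -/

/-- Composition of relations: for `R ⊆ Z × Y` and `S ⊆ Y × X`,
`RelComp R S = {(z,x) | ∃ y, (z,y) ∈ R ∧ (y,x) ∈ S}`. -/
def RelComp {X Y Z : Type} (R : Set (Z × Y)) (S : Set (Y × X)) : Set (Z × X) :=
  {p | ∃ y, (p.1, y) ∈ R ∧ (y, p.2) ∈ S}

/-- Transpose of a relation. -/
def RelTrans {X Y : Type} (R : Set (Y × X)) : Set (X × Y) := {p | (p.2, p.1) ∈ R}

/-! ## Coarse spaces -/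

/-- A coarse structure on a set `X`. -/
structure CoarseSpace (X : Type) where
  entourages : Set (Set (X × X))
  diagonal_mem : {p : X × X | p.1 = p.2} ∈ entourages
  mem_of_subset : ∀ {E F : Set (X × X)}, E ∈ entourages → F ⊆ E → F ∈ entourages
  union_mem : ∀ {E F : Set (X × X)}, E ∈ entourages → F ∈ entourages → E ∪ F ∈ entourages
  transpose_mem : ∀ {E : Set (X × X)}, E ∈ entourages → RelTrans E ∈ entourages
  comp_mem : ∀ {E F : Set (X × X)}, E ∈ entourages → F ∈ entourages → RelComp E F ∈ entourages

namespace CoarseSpace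

variable {X Y : Type}

/-- A gauge: a symmetric entourage containing the diagonal. -/
def IsGauge (C : CoarseSpace X) (E : Set (X × X)) : Prop :=
  E ∈ C.entourages ∧ RelTrans E = E ∧ {p : X × X | p.1 = p.2} ⊆ E

/-- The `E`-neighbourhood `E[A]` of a set `A`. -/
def nbhd (E : Set (X × X)) (A : Set X) : Set X := {x | ∃ a ∈ A, (x, a) ∈ E}

/-- A set is bounded if `A × A` is contained in some entourage. -/
def IsBounded (C : CoarseSpace X) (A : Set X) : Prop := ∃ E ∈ C.entourages, A ×ˢ A ⊆ E

/-- `A ≺ B` : `A` is subordinate to `B`. -/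
def Subordinate (C : CoarseSpace X) (A B : Set X) : Prop := ∃ E ∈ C.entourages, A ⊆ nbhd E B

/-- `A ≍ B` : asymptotic equivalence of subsets. -/
def Asymptotic (C : CoarseSpace X) (A B : Set X) : Prop :=
  C.Subordinate A B ∧ C.Subordinate B A

/-- A coarse map between coarse spaces. -/
def IsCoarseMap (CX : CoarseSpace X) (CY : CoarseSpace Y) (f : X → Y) : Prop :=
  ∀ E ∈ CX.entourages, (fun p : X × X => (f p.1, f p.2)) '' E ∈ CY.entourages

/-- Two maps are close. -/
def Close (CX : CoarseSpace X) (CY : CoarseSpace Y) (f g : X → Y) : Prop :=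
  ∀ E ∈ CX.entourages, (fun p : X × X => (f p.1, g p.2)) '' E ∈ CY.entourages

/-- A coarse equivalence (of maps). -/
def IsCoarseEquivMap (CX : CoarseSpace X) (CY : CoarseSpace Y) (f : X → Y) : Prop :=
  IsCoarseMap CX CY f ∧ ∃ g : Y → X, IsCoarseMap CY CX g ∧
    Close CY CY (f ∘ g) id ∧ Close CX CX (g ∘ f) id

/-- A coarse embedding: a coarse map which is in addition expansive (equivalently, a coarse
equivalence onto its image with the subspace coarse structure). -/
def IsCoarseEmbedding (CX : CoarseSpace X) (CY : CoarseSpace Y) (f : X → Y) : Prop :=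
  IsCoarseMap CX CY f ∧
    ∀ F ∈ CY.entourages, {p : X × X | (f p.1, f p.2) ∈ F} ∈ CX.entourages

/-- A coarse structure is countably generated if it is the smallest coarse structure
containing some countable family of subsets of `X × X`. -/
def IsCountablyGenerated (C : CoarseSpace X) : Prop :=
  ∃ G : Set (Set (X × X)), G.Countable ∧ G ⊆ C.entourages ∧
    ∀ C' : CoarseSpace X, G ⊆ C'.entourages → C.entourages ⊆ C'.entourages

end CoarseSpace

/-- Subordination of relations `R₁, R₂ ⊆ Y × X` with respect to the product coarse structure. -/
def RelSub {X Y : Type} (CX : CoarseSpace X) (CY : CoarseSpace Y)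
    (R₁ R₂ : Set (Y × X)) : Prop :=
  ∃ F ∈ CY.entourages, ∃ E ∈ CX.entourages,
    ∀ p ∈ R₁, ∃ q ∈ R₂, (p.1, q.1) ∈ F ∧ (p.2, q.2) ∈ E

/-- Asymptotic equivalence of relations `R₁, R₂ ⊆ Y × X`. -/
def RelAsymp {X Y : Type} (CX : CoarseSpace X) (CY : CoarseSpace Y)
    (R₁ R₂ : Set (Y × X)) : Prop :=
  RelSub CX CY R₁ R₂ ∧ RelSub CX CY R₂ R₁

/-! ## LFCM spaces -/

/-- A discrete partition of a coarse space endowed with a Boolean algebra `meas` of subsets: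
a measurable, locally finite, controlled partition `P` such that a set is measurable iff its
intersection with every block is measurable. -/
structure IsDiscretePartition {X : Type} (C : CoarseSpace X) (meas : Set (Set X))
    (P : Set (Set X)) : Prop where
  nonempty : ∀ A ∈ P, A.Nonempty
  pairwiseDisjoint : ∀ A ∈ P, ∀ B ∈ P, A ≠ B → Disjoint A B
  covers : ⋃₀ P = Set.univ
  measurable : P ⊆ meas
  locallyFinite : ∀ B : Set X, C.IsBounded B → {A | A ∈ P ∧ (A ∩ B).Nonempty}.Finite
  controlled : ∃ E, C.IsGauge E ∧ ∀ A ∈ P, A ×ˢ A ⊆ E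
  meas_iff : ∀ B : Set X, B ∈ meas ↔ ∀ A ∈ P, B ∩ A ∈ meas

/-- A locally finite coarse measurable (LFCM) space: a coarse space together with a Boolean
algebra of subsets admitting a discrete partition (a chosen one is part of the data). -/
structure LFCMSpace (X : Type) where
  coarse : CoarseSpace X
  meas : Set (Set X)
  empty_mem : ∅ ∈ meas
  compl_mem : ∀ {A : Set X}, A ∈ meas → Aᶜ ∈ meas
  union_mem : ∀ {A B : Set X}, A ∈ meas → B ∈ meas → A ∪ B ∈ meas
  partition : Set (Set X)
  isPartition : IsDiscretePartition coarse meas partition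

namespace LFCMSpace

variable {X Y : Type}

/-- The discreteness gauge `E_disc = ⊔_{A ∈ P} A × A` of an LFCM space. -/
def disc (𝒳 : LFCMSpace X) : Set (X × X) := ⋃ A ∈ 𝒳.partition, A ×ˢ A

/-- A discreteness gauge: a gauge bounding the blocks of some discrete partition. -/
def IsDiscretenessGauge (𝒳 : LFCMSpace X) (E : Set (X × X)) : Prop :=
  𝒳.coarse.IsGauge E ∧
    ∃ P, IsDiscretePartition 𝒳.coarse 𝒳.meas P ∧ ∀ A ∈ P, A ×ˢ A ⊆ E

end LFCMSpace

/-- A coarse measurable map between LFCM spaces. -/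
def IsCoarseMeasurableMap {X Y : Type} (𝒳 : LFCMSpace X) (𝒴 : LFCMSpace Y) (f : X → Y) : Prop :=
  CoarseSpace.IsCoarseMap 𝒳.coarse 𝒴.coarse f ∧ ∀ B ∈ 𝒴.meas, f ⁻¹' B ∈ 𝒳.meas

/-! ## Coarse geometric modules -/

/-- A coarse geometric module over an LFCM space `𝒳`: a representation of the Boolean algebra
of measurable sets by orthogonal projections on a complex Hilbert space, nondegenerate on
bounded sets. -/
structure CoarseModule {X : Type} (𝒳 : LFCMSpace X) (H : Type) [NormedAddCommGroup H]
    [InnerProductSpace ℂ H] [CompleteSpace H] where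
  proj : Set X → (H →L[ℂ] H)
  proj_empty : proj ∅ = 0
  proj_selfAdjoint : ∀ A ∈ 𝒳.meas, IsSelfAdjoint (proj A)
  proj_inter : ∀ {A B : Set X}, A ∈ 𝒳.meas → B ∈ 𝒳.meas → proj (A ∩ B) = proj A ∘L proj B
  proj_union : ∀ {A B : Set X}, A ∈ 𝒳.meas → B ∈ 𝒳.meas → Disjoint A B →
      proj (A ∪ B) = proj A + proj B
  nondeg : Dense (↑(Submodule.span ℂ
      (⋃ A ∈ {A | A ∈ 𝒳.meas ∧ 𝒳.coarse.IsBounded A}, Set.range (proj A))) : Set H)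

variable {X Y Z : Type}
variable {H₀ H₁ H₂ H₃ : Type}

/-- The support of a bounded operator between Hilbert spaces carrying representations
`pX`, `pY` of the measurable sets of LFCM spaces `𝒳` (source) and `𝒴` (target). -/
def opSupp [NormedAddCommGroup H₁] [InnerProductSpace ℂ H₁]
    [NormedAddCommGroup H₂] [InnerProductSpace ℂ H₂]
    (𝒳 : LFCMSpace X) (𝒴 : LFCMSpace Y)
    (pX : Set X → (H₁ →L[ℂ] H₁)) (pY : Set Y → (H₂ →L[ℂ] H₂))
    (t : H₁ →L[ℂ] H₂) : Set (Y × X) :=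
  ⋃₀ {S | ∃ B A, S = B ×ˢ A ∧ B ∈ 𝒴.meas ∧ B ×ˢ B ⊆ 𝒴.disc ∧
      A ∈ 𝒳.meas ∧ A ×ˢ A ⊆ 𝒳.disc ∧ pY B ∘L t ∘L pX A ≠ 0}

/-- Controlled propagation of an operator between modules over the same LFCM space. -/
def HasControlledPropagation [NormedAddCommGroup H₁] [InnerProductSpace ℂ H₁]
    [NormedAddCommGroup H₂] [InnerProductSpace ℂ H₂]
    (𝒳 : LFCMSpace X) (pX : Set X → (H₁ →L[ℂ] H₁)) (pY : Set X → (H₂ →L[ℂ] H₂))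
    (t : H₁ →L[ℂ] H₂) : Prop :=
  opSupp 𝒳 𝒳 pX pY t ∈ 𝒳.coarse.entourages

/-- Approximable operators: norm-limits of controlled propagation operators. -/
def Approximable [NormedAddCommGroup H₁] [InnerProductSpace ℂ H₁]
    [NormedAddCommGroup H₂] [InnerProductSpace ℂ H₂]
    (𝒳 : LFCMSpace X) (pX : Set X → (H₁ →L[ℂ] H₁)) (pY : Set X → (H₂ →L[ℂ] H₂))
    (t : H₁ →L[ℂ] H₂) : Prop :=
  ∀ ε : ℝ, 0 < ε → ∃ s : H₁ →L[ℂ] H₂, HasControlledPropagation 𝒳 pX pY s ∧ ‖t - s‖ ≤ ε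

/-- The rank (Hilbert dimension of the range) of an operator. -/
def projRank {H : Type} [NormedAddCommGroup H] [InnerProductSpace ℂ H]
    (p : H →L[ℂ] H) : Cardinal :=
  LinearMap.rank (p : H →ₗ[ℂ] H)

/-- The `κ`-domain of a coarse module, computed with respect to an arbitrary gauge `E`. -/
def domKappaAt {X : Type} {H : Type} [NormedAddCommGroup H] [InnerProductSpace ℂ H]
    [CompleteSpace H] (𝒳 : LFCMSpace X) (M : CoarseModule 𝒳 H) (E : Set (X × X))
    (κ : Cardinal) : Set X :=
  ⋃₀ {A | A ∈ 𝒳.meas ∧ A ×ˢ A ⊆ E ∧ κ ≤ projRank (M.proj A)}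

/-- The `κ`-domain of a coarse module (with respect to the discreteness gauge). -/
def domKappa {X : Type} {H : Type} [NormedAddCommGroup H] [InnerProductSpace ℂ H]
    [CompleteSpace H] (𝒳 : LFCMSpace X) (M : CoarseModule 𝒳 H) (κ : Cardinal) : Set X :=
  domKappaAt 𝒳 M 𝒳.disc κ

/-- A coarse module is faithful if its faithfulness domain is asymptotic to the whole space. -/
def IsFaithfulMod {X : Type} {H : Type} [NormedAddCommGroup H] [InnerProductSpace ℂ H]
    [CompleteSpace H] (𝒳 : LFCMSpace X) (M : CoarseModule 𝒳 H) : Prop :=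
  𝒳.coarse.Asymptotic (domKappa 𝒳 M 1) Set.univ

/-- A coarse module is ample if its ampleness domain is asymptotic to the whole space. -/
def IsAmpleMod {X : Type} {H : Type} [NormedAddCommGroup H] [InnerProductSpace ℂ H]
    [CompleteSpace H] (𝒳 : LFCMSpace X) (M : CoarseModule 𝒳 H) : Prop :=
  𝒳.coarse.Asymptotic (domKappa 𝒳 M Cardinal.aleph0) Set.univ

/-- The approximate relation `f^T_{δ,F,E}` of a bounded operator. -/
def approxRel [NormedAddCommGroup H₁] [InnerProductSpace ℂ H₁]
    [NormedAddCommGroup H₂] [InnerProductSpace ℂ H₂]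
    (𝒳 : LFCMSpace X) (𝒴 : LFCMSpace Y)
    (pX : Set X → (H₁ →L[ℂ] H₁)) (pY : Set Y → (H₂ →L[ℂ] H₂))
    (T : H₁ →L[ℂ] H₂) (δ : ℝ) (F : Set (Y × Y)) (E : Set (X × X)) : Set (Y × X) :=
  ⋃₀ {S | ∃ B A, S = B ×ˢ A ∧ B ∈ 𝒴.meas ∧ B ×ˢ B ⊆ F ∧
      A ∈ 𝒳.meas ∧ A ×ˢ A ⊆ E ∧ δ < ‖pY B ∘L T ∘L pX A‖}

/-- A unitary operator between Hilbert spaces. -/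
def IsUnitaryOp [NormedAddCommGroup H₁] [InnerProductSpace ℂ H₁] [CompleteSpace H₁]
    [NormedAddCommGroup H₂] [InnerProductSpace ℂ H₂] [CompleteSpace H₂]
    (U : H₁ →L[ℂ] H₂) : Prop :=
  ContinuousLinearMap.adjoint U ∘L U = ContinuousLinearMap.id ℂ H₁ ∧
    U ∘L ContinuousLinearMap.adjoint U = ContinuousLinearMap.id ℂ H₂

/-- A central unitary of the C*-algebra of approximable operators on a coarse module. -/
def IsCentralUnitary {X : Type} {H : Type} [NormedAddCommGroup H] [InnerProductSpace ℂ H]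
    [CompleteSpace H] (𝒳 : LFCMSpace X) (M : CoarseModule 𝒳 H) (u : H →L[ℂ] H) : Prop :=
  Approximable 𝒳 M.proj M.proj u ∧ IsUnitaryOp u ∧
    ∀ t : H →L[ℂ] H, Approximable 𝒳 M.proj M.proj t → u ∘L t = t ∘L u

/-- Equivalence of operators modulo central unitaries. -/
def CongruentModCentral {X : Type} [NormedAddCommGroup H₁] [InnerProductSpace ℂ H₁]
    [CompleteSpace H₁] [NormedAddCommGroup H₂] [InnerProductSpace ℂ H₂] [CompleteSpace H₂]
    (𝒳 : LFCMSpace X) (C : CoarseModule 𝒳 H₁) (D : CoarseModule 𝒳 H₂)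
    (t s : H₁ →L[ℂ] H₂) : Prop :=
  ∃ u v, IsCentralUnitary 𝒳 C u ∧ IsCentralUnitary 𝒳 D v ∧ t = v ∘L s ∘L u

/-! ## Direct sums of modules -/

/-- The direct sum `T ⊕ S` of two operators, on the `ℓ²`-product of Hilbert spaces. -/
def prodOp [NormedAddCommGroup H₀] [InnerProductSpace ℂ H₀]
    [NormedAddCommGroup H₁] [InnerProductSpace ℂ H₁]
    [NormedAddCommGroup H₂] [InnerProductSpace ℂ H₂]
    [NormedAddCommGroup H₃] [InnerProductSpace ℂ H₃]
    (T : H₀ →L[ℂ] H₂) (S : H₁ →L[ℂ] H₃) :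
    WithLp 2 (H₀ × H₁) →L[ℂ] WithLp 2 (H₂ × H₃) :=
  (WithLp.prodContinuousLinearEquiv 2 ℂ H₂ H₃).symm.toContinuousLinearMap ∘L
    (T.prodMap S) ∘L (WithLp.prodContinuousLinearEquiv 2 ℂ H₀ H₁).toContinuousLinearMap

/-- The canonical inclusion `H₀ → H₀ ⊕ H₁`. -/
def inlOp (H₀ H₁ : Type) [NormedAddCommGroup H₀] [InnerProductSpace ℂ H₀]
    [NormedAddCommGroup H₁] [InnerProductSpace ℂ H₁] :
    H₀ →L[ℂ] WithLp 2 (H₀ × H₁) :=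
  (WithLp.prodContinuousLinearEquiv 2 ℂ H₀ H₁).symm.toContinuousLinearMap ∘L
    ContinuousLinearMap.inl ℂ H₀ H₁

/-- The canonical inclusion `H₁ → H₀ ⊕ H₁`. -/
def inrOp (H₀ H₁ : Type) [NormedAddCommGroup H₀] [InnerProductSpace ℂ H₀]
    [NormedAddCommGroup H₁] [InnerProductSpace ℂ H₁] :
    H₁ →L[ℂ] WithLp 2 (H₀ × H₁) :=
  (WithLp.prodContinuousLinearEquiv 2 ℂ H₀ H₁).symm.toContinuousLinearMap ∘L
    ContinuousLinearMap.inr ℂ H₀ H₁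

/-- The canonical projection `H₀ ⊕ H₁ → H₀`. -/
def fstOp (H₀ H₁ : Type) [NormedAddCommGroup H₀] [InnerProductSpace ℂ H₀]
    [NormedAddCommGroup H₁] [InnerProductSpace ℂ H₁] :
    WithLp 2 (H₀ × H₁) →L[ℂ] H₀ :=
  ContinuousLinearMap.fst ℂ H₀ H₁ ∘L
    (WithLp.prodContinuousLinearEquiv 2 ℂ H₀ H₁).toContinuousLinearMap

/-- The canonical projection `H₀ ⊕ H₁ → H₁`. -/
def sndOp (H₀ H₁ : Type) [NormedAddCommGroup H₀] [InnerProductSpace ℂ H₀]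
    [NormedAddCommGroup H₁] [InnerProductSpace ℂ H₁] :
    WithLp 2 (H₀ × H₁) →L[ℂ] H₁ :=
  ContinuousLinearMap.snd ℂ H₀ H₁ ∘L
    (WithLp.prodContinuousLinearEquiv 2 ℂ H₀ H₁).toContinuousLinearMap

/-- `M` is the direct sum of the coarse modules `C₀` and `C₁`. -/
def IsDirectSum {X : Type} [NormedAddCommGroup H₀] [InnerProductSpace ℂ H₀] [CompleteSpace H₀]
    [NormedAddCommGroup H₁] [InnerProductSpace ℂ H₁] [CompleteSpace H₁]
    (𝒳 : LFCMSpace X) (C₀ : CoarseModule 𝒳 H₀) (C₁ : CoarseModule 𝒳 H₁)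
    (M : CoarseModule 𝒳 (WithLp 2 (H₀ × H₁))) : Prop :=
  ∀ A : Set X, M.proj A = prodOp (C₀.proj A) (C₁.proj A)

/-! ## Bundled modules and *-functors -/

/-- A coarse module over `𝒳` bundled together with its Hilbert space; the objects of the
approximable category `𝒜(𝒳)`. -/
structure BundledModule {X : Type} (𝒳 : LFCMSpace X) where
  H : Type
  [instNorm : NormedAddCommGroup H]
  [instInner : InnerProductSpace ℂ H]
  [instComplete : CompleteSpace H]
  mod : CoarseModule 𝒳 H

attribute [instance] BundledModule.instNorm BundledModule.instInner BundledModule.instComplete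

/-- A *-functor `𝒜(𝒳) → 𝒜(𝒴)` between approximable categories: a map on objects together
with a ℂ-linear, multiplicative, adjoint-preserving map on approximable operators. -/
structure StarFunctor {X Y : Type} (𝒳 : LFCMSpace X) (𝒴 : LFCMSpace Y) where
  obj : BundledModule 𝒳 → BundledModule 𝒴
  map : ∀ {C D : BundledModule 𝒳} (t : C.H →L[ℂ] D.H),
      Approximable 𝒳 C.mod.proj D.mod.proj t → ((obj C).H →L[ℂ] (obj D).H)
  map_approximable : ∀ {C D : BundledModule 𝒳} (t : C.H →L[ℂ] D.H)
      (ht : Approximable 𝒳 C.mod.proj D.mod.proj t),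
      Approximable 𝒴 (obj C).mod.proj (obj D).mod.proj (map t ht)
  map_id : ∀ (C : BundledModule 𝒳)
      (h : Approximable 𝒳 C.mod.proj C.mod.proj (ContinuousLinearMap.id ℂ C.H)),
      map (ContinuousLinearMap.id ℂ C.H) h = ContinuousLinearMap.id ℂ (obj C).H
  map_comp : ∀ {C D G : BundledModule 𝒳} (t : C.H →L[ℂ] D.H) (s : D.H →L[ℂ] G.H)
      (ht : Approximable 𝒳 C.mod.proj D.mod.proj t)
      (hs : Approximable 𝒳 D.mod.proj G.mod.proj s)
      (hst : Approximable 𝒳 C.mod.proj G.mod.proj (s ∘L t)),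
      map (s ∘L t) hst = map s hs ∘L map t ht
  map_add : ∀ {C D : BundledModule 𝒳} (t s : C.H →L[ℂ] D.H)
      (ht : Approximable 𝒳 C.mod.proj D.mod.proj t)
      (hs : Approximable 𝒳 C.mod.proj D.mod.proj s)
      (hts : Approximable 𝒳 C.mod.proj D.mod.proj (t + s)),
      map (t + s) hts = map t ht + map s hs
  map_smul : ∀ {C D : BundledModule 𝒳} (c : ℂ) (t : C.H →L[ℂ] D.H)
      (ht : Approximable 𝒳 C.mod.proj D.mod.proj t)
      (hct : Approximable 𝒳 C.mod.proj D.mod.proj (c • t)),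
      map (c • t) hct = c • map t ht
  map_star : ∀ {C D : BundledModule 𝒳} (t : C.H →L[ℂ] D.H)
      (ht : Approximable 𝒳 C.mod.proj D.mod.proj t)
      (hstar : Approximable 𝒳 D.mod.proj C.mod.proj (ContinuousLinearMap.adjoint t)),
      map (ContinuousLinearMap.adjoint t) hstar = ContinuousLinearMap.adjoint (map t ht)

namespace StarFunctor

variable {𝒳 : LFCMSpace X} {𝒴 : LFCMSpace Y}

/-- A full functor. -/
def Full (F : StarFunctor 𝒳 𝒴) : Prop :=
  ∀ (C D : BundledModule 𝒳) (s : (F.obj C).H →L[ℂ] (F.obj D).H),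
    Approximable 𝒴 (F.obj C).mod.proj (F.obj D).mod.proj s →
    ∃ (t : C.H →L[ℂ] D.H) (ht : Approximable 𝒳 C.mod.proj D.mod.proj t), F.map t ht = s

/-- A faithful functor. -/
def Faithful (F : StarFunctor 𝒳 𝒴) : Prop :=
  ∀ (C D : BundledModule 𝒳) (t t' : C.H →L[ℂ] D.H)
    (ht : Approximable 𝒳 C.mod.proj D.mod.proj t)
    (ht' : Approximable 𝒳 C.mod.proj D.mod.proj t'),
    F.map t ht = F.map t' ht' → t = t'

/-- An essentially surjective functor (up to isomorphism in the approximable category). -/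
def EssSurj (F : StarFunctor 𝒳 𝒴) : Prop :=
  ∀ D' : BundledModule 𝒴, ∃ C : BundledModule 𝒳,
    ∃ u : (F.obj C).H →L[ℂ] D'.H, Approximable 𝒴 (F.obj C).mod.proj D'.mod.proj u ∧
    ∃ v : D'.H →L[ℂ] (F.obj C).H, Approximable 𝒴 D'.mod.proj (F.obj C).mod.proj v ∧
      v ∘L u = ContinuousLinearMap.id ℂ (F.obj C).H ∧
      u ∘L v = ContinuousLinearMap.id ℂ D'.H

/-- A unitary `U` implements the *-isomorphism induced by `F` on the endomorphism algebra of
a module `C`. -/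
def Implements (F : StarFunctor 𝒳 𝒴) (C : BundledModule 𝒳)
    (U : C.H →L[ℂ] (F.obj C).H) : Prop :=
  IsUnitaryOp U ∧ ∀ (t : C.H →L[ℂ] C.H) (ht : Approximable 𝒳 C.mod.proj C.mod.proj t),
    F.map t ht = U ∘L t ∘L ContinuousLinearMap.adjoint U

end StarFunctor

/-- The graph of a map, as a relation `⊆ Y × X`. -/
def mapGraph {X Y : Type} (f : X → Y) : Set (Y × X) := {p | p.1 = f p.2}

/-- A relation `R ⊆ Y × X` is a coarse equivalence from `DX ⊆ X` to `DY ⊆ Y` (each with the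
subspace coarse structure): controlled in both directions, densely defined and coarsely
surjective relative to `DX` and `DY`. -/
def IsRelCoarseEquivOn {X Y : Type} (CX : CoarseSpace X) (CY : CoarseSpace Y)
    (DX : Set X) (DY : Set Y) (R : Set (Y × X)) : Prop :=
  (∀ E ∈ CX.entourages, RelComp R (RelComp E (RelTrans R)) ∈ CY.entourages) ∧
  (∀ F ∈ CY.entourages, RelComp (RelTrans R) (RelComp F R) ∈ CX.entourages) ∧
  CX.Asymptotic (Prod.snd '' R) DX ∧ CY.Asymptotic (Prod.fst '' R) DY

/-- `S ⊆ X × Y` is a coarse inverse of the relation `R ⊆ Y × X` between `DX` and `DY`: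
both compositions are asymptotic to the respective (restricted) diagonals. -/
def IsRelCoarseInverseOn {X Y : Type} (CX : CoarseSpace X) (CY : CoarseSpace Y)
    (DX : Set X) (DY : Set Y) (R : Set (Y × X)) (S : Set (X × Y)) : Prop :=
  RelAsymp CX CX (RelComp S R) {p : X × X | p.1 = p.2 ∧ p.1 ∈ DX} ∧
  RelAsymp CY CY (RelComp R S) {p : Y × Y | p.1 = p.2 ∧ p.1 ∈ DY}

/-- The statement that a coarse map `f` represents the coarse embedding induced by a full and
faithful *-functor `F` via approximate relations of implementing unitaries. -/
def RepresentsInducedEmbedding {X Y : Type} {𝒳 : LFCMSpace X} {𝒴 : LFCMSpace Y}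
    (F : StarFunctor 𝒳 𝒴) (f : X → Y) : Prop :=
  ∀ (C : BundledModule 𝒳), IsFaithfulMod 𝒳 C.mod →
  ∀ (U : C.H →L[ℂ] (F.obj C).H), F.Implements C U →
  ∀ δ : ℝ, 0 < δ → δ < 1 →
  ∃ F₀ ∈ 𝒴.coarse.entourages, ∃ E₀ ∈ 𝒳.coarse.entourages,
    ∀ F' ∈ 𝒴.coarse.entourages, F₀ ⊆ F' → ∀ E ∈ 𝒳.coarse.entourages, E₀ ⊆ E →
      RelAsymp 𝒳.coarse 𝒴.coarse
        (approxRel 𝒳 𝒴 C.mod.proj (F.obj C).mod.proj U δ F' E) (mapGraph f)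

/-- Bundle a coarse module into an object of the approximable category. -/
abbrev BundledModule.ofModule {X : Type} {𝒳 : LFCMSpace X} {H : Type} [NormedAddCommGroup H]
    [InnerProductSpace ℂ H] [CompleteSpace H] (M : CoarseModule 𝒳 H) : BundledModule 𝒳 :=
  ⟨H, M⟩

theorem LFCMSpace.disc_mem {X : Type} (𝒳 : LFCMSpace X) :
    𝒳.disc ∈ 𝒳.coarse.entourages := by
  obtain ⟨E, hE, hEP⟩ := 𝒳.isPartition.controlled
  refine 𝒳.coarse.mem_of_subset hE.1 ?_
  intro p hp
  simp only [LFCMSpace.disc, Set.mem_iUnion] at hp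
  obtain ⟨A, hA, hpA⟩ := hp
  exact hEP A hA hpA

theorem prodOp_comp_inlOp {H₀ H₁ H₂ H₃ : Type}
    [NormedAddCommGroup H₀] [InnerProductSpace ℂ H₀]
    [NormedAddCommGroup H₁] [InnerProductSpace ℂ H₁]
    [NormedAddCommGroup H₂] [InnerProductSpace ℂ H₂]
    [NormedAddCommGroup H₃] [InnerProductSpace ℂ H₃]
    (T : H₀ →L[ℂ] H₂) (S : H₁ →L[ℂ] H₃) :
    prodOp T S ∘L inlOp H₀ H₁ = inlOp H₂ H₃ ∘L T := by
  ext x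
  simp [prodOp, inlOp]

theorem prodOp_comp_inrOp {H₀ H₁ H₂ H₃ : Type}
    [NormedAddCommGroup H₀] [InnerProductSpace ℂ H₀]
    [NormedAddCommGroup H₁] [InnerProductSpace ℂ H₁]
    [NormedAddCommGroup H₂] [InnerProductSpace ℂ H₂]
    [NormedAddCommGroup H₃] [InnerProductSpace ℂ H₃]
    (T : H₀ →L[ℂ] H₂) (S : H₁ →L[ℂ] H₃) :
    prodOp T S ∘L inrOp H₀ H₁ = inrOp H₂ H₃ ∘L S := by
  ext x
  simp [prodOp, inrOp]

/-- The canonical inclusion into a direct sum of coarse modules is approximable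
(indeed it has controlled propagation). -/
theorem IsDirectSum.approximable_inl {X : Type} {H₀ H₁ : Type}
    [NormedAddCommGroup H₀] [InnerProductSpace ℂ H₀] [CompleteSpace H₀]
    [NormedAddCommGroup H₁] [InnerProductSpace ℂ H₁] [CompleteSpace H₁]
    {𝒳 : LFCMSpace X} {C₀ : CoarseModule 𝒳 H₀} {C₁ : CoarseModule 𝒳 H₁}
    {M : CoarseModule 𝒳 (WithLp 2 (H₀ × H₁))} (hM : IsDirectSum 𝒳 C₀ C₁ M) :
    Approximable 𝒳 C₀.proj M.proj (inlOp H₀ H₁) := by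
  intro ε hε
  refine ⟨inlOp H₀ H₁, ?_, by simp [hε.le]⟩
  refine 𝒳.coarse.mem_of_subset (𝒳.coarse.comp_mem 𝒳.disc_mem 𝒳.disc_mem) ?_
  rintro ⟨y, x⟩ hyx
  obtain ⟨s, ⟨B, A, rfl, hBmeas, hBb, hAmeas, hAb, hne⟩, hmem⟩ := hyx
  have key : M.proj B ∘L inlOp H₀ H₁ ∘L C₀.proj A
      = inlOp H₀ H₁ ∘L C₀.proj (B ∩ A) := by
    rw [C₀.proj_inter hBmeas hAmeas, hM B, ← ContinuousLinearMap.comp_assoc,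
      prodOp_comp_inlOp, ContinuousLinearMap.comp_assoc]
  have hBA : (B ∩ A).Nonempty := by
    by_contra h
    rw [Set.not_nonempty_iff_eq_empty] at h
    apply hne
    rw [key, h, C₀.proj_empty]
    ext z
    simp
  obtain ⟨z, hzB, hzA⟩ := hBA
  obtain ⟨hyB, hxA⟩ := hmem
  exact ⟨z, hBb ⟨hyB, hzB⟩, hAb ⟨hzA, hxA⟩⟩

theorem IsDirectSum.approximable_inr {X : Type} {H₀ H₁ : Type}
    [NormedAddCommGroup H₀] [InnerProductSpace ℂ H₀] [CompleteSpace H₀]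
    [NormedAddCommGroup H₁] [InnerProductSpace ℂ H₁] [CompleteSpace H₁]
    {𝒳 : LFCMSpace X} {C₀ : CoarseModule 𝒳 H₀} {C₁ : CoarseModule 𝒳 H₁}
    {M : CoarseModule 𝒳 (WithLp 2 (H₀ × H₁))} (hM : IsDirectSum 𝒳 C₀ C₁ M) :
    Approximable 𝒳 C₁.proj M.proj (inrOp H₀ H₁) := by
  intro ε hε
  refine ⟨inrOp H₀ H₁, ?_, by simp [hε.le]⟩
  refine 𝒳.coarse.mem_of_subset (𝒳.coarse.comp_mem 𝒳.disc_mem 𝒳.disc_mem) ?_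
  rintro ⟨y, x⟩ hyx
  obtain ⟨s, ⟨B, A, rfl, hBmeas, hBb, hAmeas, hAb, hne⟩, hmem⟩ := hyx
  have key : M.proj B ∘L inrOp H₀ H₁ ∘L C₁.proj A
      = inrOp H₀ H₁ ∘L C₁.proj (B ∩ A) := by
    rw [C₁.proj_inter hBmeas hAmeas, hM B, ← ContinuousLinearMap.comp_assoc,
      prodOp_comp_inrOp, ContinuousLinearMap.comp_assoc]
  have hBA : (B ∩ A).Nonempty := by
    by_contra h
    rw [Set.not_nonempty_iff_eq_empty] at h
    apply hne
    rw [key, h, C₁.proj_empty]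
    ext z
    simp
  obtain ⟨z, hzB, hzA⟩ := hBA
  obtain ⟨hyB, hxA⟩ := hmem
  exact ⟨z, hBb ⟨hyB, hzB⟩, hAb ⟨hzA, hxA⟩⟩

section OpLemmas

variable {H₀ H₁ H₂ H₃ : Type}
    [NormedAddCommGroup H₀] [InnerProductSpace ℂ H₀]
    [NormedAddCommGroup H₁] [InnerProductSpace ℂ H₁]
    [NormedAddCommGroup H₂] [InnerProductSpace ℂ H₂]
    [NormedAddCommGroup H₃] [InnerProductSpace ℂ H₃]

theorem fstOp_comp_inlOp : fstOp H₀ H₁ ∘L inlOp H₀ H₁ = ContinuousLinearMap.id ℂ H₀ := by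
  ext x; simp [fstOp, inlOp]

theorem sndOp_comp_inrOp : sndOp H₀ H₁ ∘L inrOp H₀ H₁ = ContinuousLinearMap.id ℂ H₁ := by
  ext x; simp [sndOp, inrOp]

theorem fstOp_comp_prodOp (T : H₀ →L[ℂ] H₂) (S : H₁ →L[ℂ] H₃) :
    fstOp H₂ H₃ ∘L prodOp T S = T ∘L fstOp H₀ H₁ := by
  ext x; simp [fstOp, prodOp]

theorem sndOp_comp_prodOp (T : H₀ →L[ℂ] H₂) (S : H₁ →L[ℂ] H₃) :
    sndOp H₂ H₃ ∘L prodOp T S = S ∘L sndOp H₀ H₁ := by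
  ext x; simp [sndOp, prodOp]

theorem prodOp_eq (T : H₀ →L[ℂ] H₂) (S : H₁ →L[ℂ] H₃) :
    prodOp T S = inlOp H₂ H₃ ∘L T ∘L fstOp H₀ H₁ + inrOp H₂ H₃ ∘L S ∘L sndOp H₀ H₁ := by
  ext x <;> simp [prodOp, inlOp, inrOp, fstOp, sndOp, ← WithLp.toLp_add, Prod.map,
    Prod.ext_iff]

theorem prodOp_comp_prodOp {H₄ H₅ : Type}
    [NormedAddCommGroup H₄] [InnerProductSpace ℂ H₄]
    [NormedAddCommGroup H₅] [InnerProductSpace ℂ H₅]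
    (T : H₂ →L[ℂ] H₄) (S : H₃ →L[ℂ] H₅)
    (T' : H₀ →L[ℂ] H₂) (S' : H₁ →L[ℂ] H₃) :
    prodOp T S ∘L prodOp T' S' = prodOp (T ∘L T') (S ∘L S') := by
  ext x <;> simp [prodOp, Prod.map, Prod.ext_iff]

variable [CompleteSpace H₀] [CompleteSpace H₁]

theorem adjoint_inlOp : ContinuousLinearMap.adjoint (inlOp H₀ H₁) = fstOp H₀ H₁ := by
  symm
  rw [ContinuousLinearMap.eq_adjoint_iff]
  intro x y
  simp [fstOp, inlOp, WithLp.prod_inner_apply]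

theorem adjoint_inrOp : ContinuousLinearMap.adjoint (inrOp H₀ H₁) = sndOp H₀ H₁ := by
  symm
  rw [ContinuousLinearMap.eq_adjoint_iff]
  intro x y
  simp [sndOp, inrOp, WithLp.prod_inner_apply]

theorem adjoint_fstOp : ContinuousLinearMap.adjoint (fstOp H₀ H₁) = inlOp H₀ H₁ := by
  rw [← adjoint_inlOp, ContinuousLinearMap.adjoint_adjoint]

theorem adjoint_sndOp : ContinuousLinearMap.adjoint (sndOp H₀ H₁) = inrOp H₀ H₁ := by
  rw [← adjoint_inrOp, ContinuousLinearMap.adjoint_adjoint]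

variable [CompleteSpace H₂] [CompleteSpace H₃]

theorem adjoint_prodOp (T : H₀ →L[ℂ] H₂) (S : H₁ →L[ℂ] H₃) :
    ContinuousLinearMap.adjoint (prodOp T S)
      = prodOp (ContinuousLinearMap.adjoint T) (ContinuousLinearMap.adjoint S) := by
  rw [prodOp_eq T S, prodOp_eq (ContinuousLinearMap.adjoint T) (ContinuousLinearMap.adjoint S),
    map_add]
  simp only [ContinuousLinearMap.adjoint_comp, adjoint_inlOp, adjoint_inrOp, adjoint_fstOp,
    adjoint_sndOp, ContinuousLinearMap.comp_assoc]

end OpLemmas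

section ApproxLemmas

variable {X : Type} {𝒳 : LFCMSpace X}

theorem LFCMSpace.inter_mem {A B : Set X} (hA : A ∈ 𝒳.meas) (hB : B ∈ 𝒳.meas) :
    A ∩ B ∈ 𝒳.meas := by
  have : A ∩ B = (Aᶜ ∪ Bᶜ)ᶜ := by
    ext x; simp [not_or]
  rw [this]
  exact 𝒳.compl_mem (𝒳.union_mem (𝒳.compl_mem hA) (𝒳.compl_mem hB))

variable {H₁ H₂ H₃ : Type}
    [NormedAddCommGroup H₁] [InnerProductSpace ℂ H₁]
    [NormedAddCommGroup H₂] [InnerProductSpace ℂ H₂]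
    [NormedAddCommGroup H₃] [InnerProductSpace ℂ H₃]

/-- Postcomposition with an operator intertwining the projections preserves approximability. -/
theorem Approximable.postcomp {p₁ : Set X → (H₁ →L[ℂ] H₁)} {p₂ : Set X → (H₂ →L[ℂ] H₂)}
    {p₃ : Set X → (H₃ →L[ℂ] H₃)} {J : H₂ →L[ℂ] H₃}
    (hcomm : ∀ A ∈ 𝒳.meas, p₃ A ∘L J = J ∘L p₂ A)
    {t : H₁ →L[ℂ] H₂} (ht : Approximable 𝒳 p₁ p₂ t) :
    Approximable 𝒳 p₁ p₃ (J ∘L t) := by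
  intro ε hε
  obtain ⟨s, hs, hts⟩ := ht (ε / (‖J‖ + 1)) (by positivity)
  refine ⟨J ∘L s, ?_, ?_⟩
  · refine 𝒳.coarse.mem_of_subset hs ?_
    refine Set.sUnion_subset_sUnion ?_
    rintro S ⟨B, A, rfl, hBm, hBd, hAm, hAd, hne⟩
    refine ⟨B, A, rfl, hBm, hBd, hAm, hAd, ?_⟩
    intro h0
    apply hne
    calc p₃ B ∘L (J ∘L s) ∘L p₁ A = J ∘L (p₂ B ∘L s ∘L p₁ A) := by
          rw [← ContinuousLinearMap.comp_assoc, ← ContinuousLinearMap.comp_assoc,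
            hcomm B hBm, ContinuousLinearMap.comp_assoc, ContinuousLinearMap.comp_assoc]
      _ = 0 := by rw [h0]; ext x; simp
  · have h1 : J ∘L t - J ∘L s = J ∘L (t - s) := by
      ext x; simp
    rw [h1]
    calc ‖J ∘L (t - s)‖ ≤ ‖J‖ * ‖t - s‖ := ContinuousLinearMap.opNorm_comp_le _ _
      _ ≤ ‖J‖ * (ε / (‖J‖ + 1)) := by
          gcongr
      _ ≤ ε := by
          rw [div_eq_inv_mul, ← mul_assoc]
          have h2 : 0 ≤ ‖J‖ := norm_nonneg _
          have h3 : ‖J‖ * (‖J‖ + 1)⁻¹ ≤ 1 := by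
            rw [mul_inv_le_iff₀ (by positivity)]
            linarith
          nlinarith

/-- Precomposition with an operator intertwining the projections preserves approximability. -/
theorem Approximable.precomp {p₁ : Set X → (H₁ →L[ℂ] H₁)} {p₂ : Set X → (H₂ →L[ℂ] H₂)}
    {p₃ : Set X → (H₃ →L[ℂ] H₃)} {J : H₃ →L[ℂ] H₁}
    (hcomm : ∀ A ∈ 𝒳.meas, p₁ A ∘L J = J ∘L p₃ A)
    {t : H₁ →L[ℂ] H₂} (ht : Approximable 𝒳 p₁ p₂ t) :
    Approximable 𝒳 p₃ p₂ (t ∘L J) := by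
  intro ε hε
  obtain ⟨s, hs, hts⟩ := ht (ε / (‖J‖ + 1)) (by positivity)
  refine ⟨s ∘L J, ?_, ?_⟩
  · refine 𝒳.coarse.mem_of_subset hs ?_
    refine Set.sUnion_subset_sUnion ?_
    rintro S ⟨B, A, rfl, hBm, hBd, hAm, hAd, hne⟩
    refine ⟨B, A, rfl, hBm, hBd, hAm, hAd, ?_⟩
    intro h0
    apply hne
    calc p₂ B ∘L (s ∘L J) ∘L p₃ A = (p₂ B ∘L s ∘L p₁ A) ∘L J := by
          simp only [ContinuousLinearMap.comp_assoc]
          rw [← hcomm A hAm]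
      _ = 0 := by rw [h0]; ext x; simp
  · have h1 : t ∘L J - s ∘L J = (t - s) ∘L J := by
      ext x; simp
    rw [h1]
    calc ‖(t - s) ∘L J‖ ≤ ‖t - s‖ * ‖J‖ := ContinuousLinearMap.opNorm_comp_le _ _
      _ ≤ (ε / (‖J‖ + 1)) * ‖J‖ := by gcongr
      _ ≤ ε := by
          rw [div_eq_inv_mul, mul_assoc]
          have h2 : 0 ≤ ‖J‖ := norm_nonneg _
          have h3 : (‖J‖ + 1)⁻¹ * (1 * ‖J‖) ≤ 1 := by
            rw [one_mul, inv_mul_le_iff₀ (by positivity)]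
            linarith
          nlinarith

variable [CompleteSpace H₁]

/-- An operator commuting with all measurable projections has controlled propagation,
hence is approximable. -/
theorem approximable_of_commutes {C : CoarseModule 𝒳 H₁} {u : H₁ →L[ℂ] H₁}
    (hcomm : ∀ A ∈ 𝒳.meas, u ∘L C.proj A = C.proj A ∘L u) :
    Approximable 𝒳 C.proj C.proj u := by
  intro ε hε
  refine ⟨u, ?_, by simp [hε.le]⟩
  refine 𝒳.coarse.mem_of_subset (𝒳.coarse.comp_mem 𝒳.disc_mem 𝒳.disc_mem) ?_
  rintro ⟨y, x⟩ hyx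
  obtain ⟨s, ⟨B, A, rfl, hBm, hBd, hAm, hAd, hne⟩, hyB, hxA⟩ := hyx
  have key : C.proj B ∘L u ∘L C.proj A = C.proj (B ∩ A) ∘L u := by
    rw [hcomm A hAm, ← ContinuousLinearMap.comp_assoc, ← C.proj_inter hBm hAm]
  have hBA : (B ∩ A).Nonempty := by
    by_contra h
    rw [Set.not_nonempty_iff_eq_empty] at h
    apply hne
    rw [key, h, C.proj_empty]
    ext z; simp
  obtain ⟨z, hzB, hzA⟩ := hBA
  exact ⟨z, hBd ⟨hyB, hzB⟩, hAd ⟨hzA, hxA⟩⟩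

theorem approximable_id (C : CoarseModule 𝒳 H₁) :
    Approximable 𝒳 C.proj C.proj (ContinuousLinearMap.id ℂ H₁) :=
  approximable_of_commutes (fun A _ => by
    rw [ContinuousLinearMap.id_comp, ContinuousLinearMap.comp_id])

theorem approximable_proj (C : CoarseModule 𝒳 H₁) {A₀ : Set X} (hA₀ : A₀ ∈ 𝒳.meas) :
    Approximable 𝒳 C.proj C.proj (C.proj A₀) :=
  approximable_of_commutes (fun A hA => by
    rw [← C.proj_inter hA₀ hA, ← C.proj_inter hA hA₀, Set.inter_comm])

end ApproxLemmas

/-- `F.map` is independent of the approximability proof and respects equality of operators. -/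
theorem StarFunctor.map_congr {X Y : Type} {𝒳 : LFCMSpace X} {𝒴 : LFCMSpace Y}
    (F : StarFunctor 𝒳 𝒴) {C D : BundledModule 𝒳} {t t' : C.H →L[ℂ] D.H} (h : t = t')
    (ht : Approximable 𝒳 C.mod.proj D.mod.proj t)
    (ht' : Approximable 𝒳 C.mod.proj D.mod.proj t') :
    F.map t ht = F.map t' ht' := by subst h; rfl

theorem comp_cancel_left {H₁ H₂ H₃ : Type}
    [NormedAddCommGroup H₁] [InnerProductSpace ℂ H₁]
    [NormedAddCommGroup H₂] [InnerProductSpace ℂ H₂]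
    [NormedAddCommGroup H₃] [InnerProductSpace ℂ H₃]
    {a : H₂ →L[ℂ] H₃} {b : H₃ →L[ℂ] H₂} (h : a ∘L b = ContinuousLinearMap.id ℂ H₃)
    (c : H₁ →L[ℂ] H₃) : a ∘L (b ∘L c) = c := by
  rw [← ContinuousLinearMap.comp_assoc, h, ContinuousLinearMap.id_comp]

theorem comp_rw {H₁ H₂ H₃ H₄ : Type}
    [NormedAddCommGroup H₁] [InnerProductSpace ℂ H₁]
    [NormedAddCommGroup H₂] [InnerProductSpace ℂ H₂]
    [NormedAddCommGroup H₃] [InnerProductSpace ℂ H₃]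
    [NormedAddCommGroup H₄] [InnerProductSpace ℂ H₄]
    {a : H₂ →L[ℂ] H₃} {b : H₁ →L[ℂ] H₂} {c : H₁ →L[ℂ] H₃} (h : a ∘L b = c)
    (d : H₄ →L[ℂ] H₁) : a ∘L (b ∘L d) = c ∘L d := by
  rw [← ContinuousLinearMap.comp_assoc, h]

set_option maxHeartbeats 2000000 in
/-- Key auxiliary result: an isometric summand inclusion `J : K → N` of coarse modules,
conjugated through implementing unitaries, differs from `F.map J` by a central unitary. -/
theorem summand_central {X Y : Type} {𝒳 : LFCMSpace X} {𝒴 : LFCMSpace Y}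
    (F : StarFunctor 𝒳 𝒴) (K N : BundledModule 𝒳)
    (J : K.H →L[ℂ] N.H) (hJ : Approximable 𝒳 K.mod.proj N.mod.proj J)
    (hcomm : ∀ A ∈ 𝒳.meas, N.mod.proj A ∘L J = J ∘L K.mod.proj A)
    (hJJ : ContinuousLinearMap.adjoint J ∘L J = ContinuousLinearMap.id ℂ K.H)
    (UK : K.H →L[ℂ] (F.obj K).H) (hUK : F.Implements K UK)
    (UN : N.H →L[ℂ] (F.obj N).H) (hUN : F.Implements N UN) :
    ∃ u : K.H →L[ℂ] K.H, IsCentralUnitary 𝒳 K.mod u ∧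
      UN ∘L (J ∘L (u ∘L ContinuousLinearMap.adjoint UK)) = F.map J hJ := by
  obtain ⟨⟨hUK1, hUK2⟩, hUKimp⟩ := hUK
  obtain ⟨⟨hUN1, hUN2⟩, hUNimp⟩ := hUN
  -- the adjoint of `J` also intertwines the projections
  have hcomm' : ∀ A ∈ 𝒳.meas,
      K.mod.proj A ∘L ContinuousLinearMap.adjoint J
        = ContinuousLinearMap.adjoint J ∘L N.mod.proj A := by
    intro A hA
    have hNA : ContinuousLinearMap.adjoint (N.mod.proj A) = N.mod.proj A := by
      rw [← ContinuousLinearMap.star_eq_adjoint]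
      exact (N.mod.proj_selfAdjoint A hA).star_eq
    have hKA : ContinuousLinearMap.adjoint (K.mod.proj A) = K.mod.proj A := by
      rw [← ContinuousLinearMap.star_eq_adjoint]
      exact (K.mod.proj_selfAdjoint A hA).star_eq
    have h1 := congrArg ContinuousLinearMap.adjoint (hcomm A hA)
    rw [ContinuousLinearMap.adjoint_comp, ContinuousLinearMap.adjoint_comp, hNA, hKA] at h1
    exact h1.symm
  have hJ' : Approximable 𝒳 N.mod.proj K.mod.proj (ContinuousLinearMap.adjoint J) := by
    have := (approximable_id K.mod).precomp hcomm'
    rwa [ContinuousLinearMap.id_comp] at this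
  -- abbreviations
  set s : K.H →L[ℂ] N.H :=
    ContinuousLinearMap.adjoint UN ∘L (F.map J hJ ∘L UK) with hs
  have hadj_s : ContinuousLinearMap.adjoint s
      = ContinuousLinearMap.adjoint UK ∘L (F.map (ContinuousLinearMap.adjoint J) hJ' ∘L UN) := by
    rw [hs, ContinuousLinearMap.adjoint_comp, ContinuousLinearMap.adjoint_comp,
      ContinuousLinearMap.adjoint_adjoint, F.map_star J hJ hJ']
    simp only [ContinuousLinearMap.comp_assoc]
  -- unitary intertwining identities
  have hUKt : ∀ (t : K.H →L[ℂ] K.H) (ht : Approximable 𝒳 K.mod.proj K.mod.proj t),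
      UK ∘L t = F.map t ht ∘L UK := by
    intro t ht
    rw [hUKimp t ht]
    simp only [ContinuousLinearMap.comp_assoc, hUK1, ContinuousLinearMap.comp_id]
  have hUNt : ∀ (t : N.H →L[ℂ] N.H) (ht : Approximable 𝒳 N.mod.proj N.mod.proj t),
      F.map t ht ∘L UN = UN ∘L t := by
    intro t ht
    rw [hUNimp t ht]
    simp only [ContinuousLinearMap.comp_assoc, hUN1, ContinuousLinearMap.comp_id]
  -- fusing through the functor
  have hfuse : ∀ (t : K.H →L[ℂ] K.H) (ht : Approximable 𝒳 K.mod.proj K.mod.proj t),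
      F.map J hJ ∘L (F.map t ht ∘L (F.map (ContinuousLinearMap.adjoint J) hJ' ∘L UN))
        = UN ∘L (J ∘L (t ∘L ContinuousLinearMap.adjoint J)) := by
    intro t ht
    have h1 : Approximable 𝒳 N.mod.proj K.mod.proj (t ∘L ContinuousLinearMap.adjoint J) :=
      ht.precomp hcomm'
    have h2 : Approximable 𝒳 N.mod.proj N.mod.proj
        (J ∘L (t ∘L ContinuousLinearMap.adjoint J)) := h1.postcomp hcomm
    calc F.map J hJ ∘L (F.map t ht ∘L (F.map (ContinuousLinearMap.adjoint J) hJ' ∘L UN))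
        = (F.map J hJ ∘L (F.map t ht ∘L F.map (ContinuousLinearMap.adjoint J) hJ')) ∘L UN := by
          simp only [ContinuousLinearMap.comp_assoc]
      _ = F.map (J ∘L (t ∘L ContinuousLinearMap.adjoint J)) h2 ∘L UN := by
          rw [F.map_comp _ _ h1 hJ h2, F.map_comp _ _ hJ' ht h1]
      _ = UN ∘L (J ∘L (t ∘L ContinuousLinearMap.adjoint J)) := hUNt _ h2
  -- s is an isometry
  have hFmul : F.map (ContinuousLinearMap.adjoint J) hJ' ∘L F.map J hJ
      = ContinuousLinearMap.id ℂ (F.obj K).H := by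
    have hJJa : Approximable 𝒳 K.mod.proj K.mod.proj (ContinuousLinearMap.adjoint J ∘L J) :=
      hJJ ▸ approximable_id K.mod
    calc F.map (ContinuousLinearMap.adjoint J) hJ' ∘L F.map J hJ
        = F.map (ContinuousLinearMap.adjoint J ∘L J) hJJa := (F.map_comp _ _ hJ hJ' hJJa).symm
      _ = F.map (ContinuousLinearMap.id ℂ K.H) (approximable_id K.mod) :=
          F.map_congr hJJ _ _
      _ = ContinuousLinearMap.id ℂ (F.obj K).H := F.map_id K _
  have hss : ContinuousLinearMap.adjoint s ∘L s = ContinuousLinearMap.id ℂ K.H := by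
    rw [hadj_s, hs]
    simp only [ContinuousLinearMap.comp_assoc]
    rw [comp_cancel_left hUN2, comp_cancel_left hFmul, hUK1]
  -- the key sandwich identity
  have hkey : ∀ (t : K.H →L[ℂ] K.H) (ht : Approximable 𝒳 K.mod.proj K.mod.proj t),
      s ∘L (t ∘L ContinuousLinearMap.adjoint s)
        = J ∘L (t ∘L ContinuousLinearMap.adjoint J) := by
    intro t ht
    calc s ∘L (t ∘L ContinuousLinearMap.adjoint s)
        = ContinuousLinearMap.adjoint UN ∘L (F.map J hJ ∘L ((UK ∘L t) ∘L
            (ContinuousLinearMap.adjoint UK ∘L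
              (F.map (ContinuousLinearMap.adjoint J) hJ' ∘L UN)))) := by
          rw [hs, hadj_s]
          simp only [ContinuousLinearMap.comp_assoc]
      _ = ContinuousLinearMap.adjoint UN ∘L (F.map J hJ ∘L ((F.map t ht ∘L UK) ∘L
            (ContinuousLinearMap.adjoint UK ∘L
              (F.map (ContinuousLinearMap.adjoint J) hJ' ∘L UN)))) := by
          rw [hUKt t ht]
      _ = ContinuousLinearMap.adjoint UN ∘L (F.map J hJ ∘L (F.map t ht ∘L
            (F.map (ContinuousLinearMap.adjoint J) hJ' ∘L UN))) := by
          simp only [ContinuousLinearMap.comp_assoc]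
          rw [comp_cancel_left hUK2]
      _ = ContinuousLinearMap.adjoint UN ∘L (UN ∘L
            (J ∘L (t ∘L ContinuousLinearMap.adjoint J))) := by rw [hfuse t ht]
      _ = J ∘L (t ∘L ContinuousLinearMap.adjoint J) := comp_cancel_left hUN1 _
  have hss2 : s ∘L ContinuousLinearMap.adjoint s = J ∘L ContinuousLinearMap.adjoint J := by
    have h := hkey (ContinuousLinearMap.id ℂ K.H) (approximable_id K.mod)
    rwa [ContinuousLinearMap.id_comp, ContinuousLinearMap.id_comp] at h
  -- the central unitary
  set u : K.H →L[ℂ] K.H := ContinuousLinearMap.adjoint J ∘L s with hu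
  have hJu : J ∘L u = s := by
    rw [hu, comp_rw hss2.symm s]
    simp only [ContinuousLinearMap.comp_assoc, hss, ContinuousLinearMap.comp_id]
  have hadj_u : ContinuousLinearMap.adjoint u = ContinuousLinearMap.adjoint s ∘L J := by
    rw [hu, ContinuousLinearMap.adjoint_comp, ContinuousLinearMap.adjoint_adjoint]
  have huu1 : ContinuousLinearMap.adjoint u ∘L u = ContinuousLinearMap.id ℂ K.H := by
    rw [hadj_u, hu]
    simp only [ContinuousLinearMap.comp_assoc]
    rw [show J ∘L (ContinuousLinearMap.adjoint J ∘L s) = s from by rw [← hu, hJu], hss]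
  have huu2 : u ∘L ContinuousLinearMap.adjoint u = ContinuousLinearMap.id ℂ K.H := by
    calc u ∘L ContinuousLinearMap.adjoint u
        = ContinuousLinearMap.adjoint J ∘L (s ∘L (ContinuousLinearMap.adjoint s ∘L J)) := by
          rw [hu, hadj_u]
          simp only [ContinuousLinearMap.comp_assoc]
      _ = ContinuousLinearMap.adjoint J ∘L ((J ∘L ContinuousLinearMap.adjoint J) ∘L J) := by
          rw [comp_rw hss2]
      _ = ContinuousLinearMap.id ℂ K.H := by
          simp only [ContinuousLinearMap.comp_assoc]
          rw [comp_cancel_left hJJ, hJJ]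
  -- centrality
  have hsand : ∀ (t : K.H →L[ℂ] K.H), Approximable 𝒳 K.mod.proj K.mod.proj t →
      u ∘L (t ∘L ContinuousLinearMap.adjoint u) = t := by
    intro t ht
    calc u ∘L (t ∘L ContinuousLinearMap.adjoint u)
        = ContinuousLinearMap.adjoint J ∘L ((s ∘L (t ∘L ContinuousLinearMap.adjoint s)) ∘L J) := by
          rw [hu, hadj_u]
          simp only [ContinuousLinearMap.comp_assoc]
      _ = ContinuousLinearMap.adjoint J ∘L ((J ∘L (t ∘L ContinuousLinearMap.adjoint J)) ∘L J) := by
          rw [hkey t ht]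
      _ = t := by
          simp only [ContinuousLinearMap.comp_assoc, hJJ, ContinuousLinearMap.comp_id]
          rw [comp_cancel_left hJJ]
  have hcent : ∀ (t : K.H →L[ℂ] K.H), Approximable 𝒳 K.mod.proj K.mod.proj t →
      u ∘L t = t ∘L u := by
    intro t ht
    calc u ∘L t
        = u ∘L (t ∘L (ContinuousLinearMap.adjoint u ∘L u)) := by
          rw [huu1, ContinuousLinearMap.comp_id]
      _ = (u ∘L (t ∘L ContinuousLinearMap.adjoint u)) ∘L u := by
          simp only [ContinuousLinearMap.comp_assoc]
      _ = t ∘L u := by rw [hsand t ht]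
  have happrox : Approximable 𝒳 K.mod.proj K.mod.proj u :=
    approximable_of_commutes (fun A hA => hcent _ (approximable_proj K.mod hA))
  refine ⟨u, ⟨happrox, ⟨huu1, huu2⟩, hcent⟩, ?_⟩
  calc UN ∘L (J ∘L (u ∘L ContinuousLinearMap.adjoint UK))
      = UN ∘L ((J ∘L u) ∘L ContinuousLinearMap.adjoint UK) := by
        simp only [ContinuousLinearMap.comp_assoc]
    _ = UN ∘L (ContinuousLinearMap.adjoint UN ∘L (F.map J hJ ∘L
          (UK ∘L ContinuousLinearMap.adjoint UK))) := by
        rw [hJu, hs]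
        simp only [ContinuousLinearMap.comp_assoc]
    _ = F.map J hJ := by
        rw [comp_cancel_left hUN2, hUK2, ContinuousLinearMap.comp_id]

/-- The additivity isomorphism of a full and faithful *-functor is the
implementing unitary of the direct sum, twisted by central unitaries:
`α_{C,D} = U(C⊕D) (u ⊕ v) (U(C) ⊕ U(D))*`. -/
theorem additivity_iso_obstruction {X Y : Type}
    (𝒳 : LFCMSpace X) (𝒴 : LFCMSpace Y)
    (F : StarFunctor 𝒳 𝒴) (hfull : F.Full) (hfaithful : F.Faithful)
    (C D : BundledModule 𝒳)
    (M : CoarseModule 𝒳 (WithLp 2 (C.H × D.H))) (hM : IsDirectSum 𝒳 C.mod D.mod M)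
    (UC : C.H →L[ℂ] (F.obj C).H) (hUC : F.Implements C UC)
    (UD : D.H →L[ℂ] (F.obj D).H) (hUD : F.Implements D UD)
    (US : WithLp 2 (C.H × D.H) →L[ℂ] (F.obj (BundledModule.ofModule M)).H)
    (hUS : F.Implements (BundledModule.ofModule M) US) :
    ∃ (u : C.H →L[ℂ] C.H) (v : D.H →L[ℂ] D.H),
      IsCentralUnitary 𝒳 C.mod u ∧ IsCentralUnitary 𝒳 D.mod v ∧
      F.map (inlOp C.H D.H) hM.approximable_inl ∘L fstOp (F.obj C).H (F.obj D).H
          + F.map (inrOp C.H D.H) hM.approximable_inr ∘L sndOp (F.obj C).H (F.obj D).H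
        = US ∘L prodOp u v ∘L ContinuousLinearMap.adjoint (prodOp UC UD) := by
  have hcommC : ∀ A ∈ 𝒳.meas,
      (BundledModule.ofModule M).mod.proj A ∘L inlOp C.H D.H
        = inlOp C.H D.H ∘L C.mod.proj A := by
    intro A _
    show M.proj A ∘L inlOp C.H D.H = inlOp C.H D.H ∘L C.mod.proj A
    rw [hM A, prodOp_comp_inlOp]
  have hcommD : ∀ A ∈ 𝒳.meas,
      (BundledModule.ofModule M).mod.proj A ∘L inrOp C.H D.H
        = inrOp C.H D.H ∘L D.mod.proj A := by
    intro A _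
    show M.proj A ∘L inrOp C.H D.H = inrOp C.H D.H ∘L D.mod.proj A
    rw [hM A, prodOp_comp_inrOp]
  have hJJC : ContinuousLinearMap.adjoint (inlOp C.H D.H) ∘L inlOp C.H D.H
      = ContinuousLinearMap.id ℂ C.H := by
    rw [adjoint_inlOp, fstOp_comp_inlOp]
  have hJJD : ContinuousLinearMap.adjoint (inrOp C.H D.H) ∘L inrOp C.H D.H
      = ContinuousLinearMap.id ℂ D.H := by
    rw [adjoint_inrOp, sndOp_comp_inrOp]
  obtain ⟨u, hu, hequ⟩ := summand_central F C (BundledModule.ofModule M) (inlOp C.H D.H)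
    hM.approximable_inl hcommC hJJC UC hUC US hUS
  obtain ⟨v, hv, heqv⟩ := summand_central F D (BundledModule.ofModule M) (inrOp C.H D.H)
    hM.approximable_inr hcommD hJJD UD hUD US hUS
  refine ⟨u, v, hu, hv, ?_⟩
  rw [← hequ, ← heqv, adjoint_prodOp, prodOp_comp_prodOp, prodOp_eq,
    ContinuousLinearMap.comp_add]
  simp only [ContinuousLinearMap.comp_assoc]
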